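/- Let ρ ∈ E be nonzero and let K > 0. Then there exist C > 0 and θ₀ ∈ (0,1) such that for every θ ∈ (0, θ₀] and all vectors a, c ∈ E satisfying ‖a‖ ≥ θ^{−2}, ‖c‖ ≤ K, and ∠(a, ρ) ≤ θ, one has | ‖a‖ − ‖a − c‖ − ⟨ρ/‖ρ‖, c⟩ | ≤ C·θ. -/

import Mathlib

open RealInnerProductSpace

private lemma one_sub_cos_le_half_sq' (x : ℝ) : 1 - Real.cos x ≤ x ^ 2 / 2 := by
  have h1 : Real.cos x = 1 - 2 * Real.sin (x / 2) ^ 2 := by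
    have h2 := Real.cos_two_mul' (x / 2)
    rw [mul_div_cancel₀ x two_ne_zero] at h2
    rw [h2, Real.cos_sq']; ring
  nlinarith [Real.sin_sq_le_sq (x := x / 2)]

set_option maxHeartbeats 1000000 in
/-- If `ρ ≠ 0` and `K > 0`, then there are `C > 0` and `θ₀ ∈ (0,1)` such that for all
`θ ∈ (0, θ₀]` and all `a, c` with `‖a‖ ≥ θ⁻²`, `‖c‖ ≤ K` and `∠(a,ρ) ≤ θ`, one has
`|‖a‖ − ‖a − c‖ − ⟨ρ/‖ρ‖, c⟩| ≤ Cθ`. -/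
theorem norm_sub_norm_sub_approx_direction {E : Type*} [NormedAddCommGroup E]
    [InnerProductSpace ℝ E] [FiniteDimensional ℝ E]
    (ρ : E) (hρ : ρ ≠ 0) (K : ℝ) (hK : 0 < K) :
    ∃ C > (0 : ℝ), ∃ θ₀ ∈ Set.Ioo (0 : ℝ) 1, ∀ θ ∈ Set.Ioc (0 : ℝ) θ₀, ∀ a c : E,
      θ ^ (-2 : ℤ) ≤ ‖a‖ → ‖c‖ ≤ K → InnerProductGeometry.angle a ρ ≤ θ →
      |‖a‖ - ‖a - c‖ - ⟪‖ρ‖⁻¹ • ρ, c⟫| ≤ C * θ := by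
  refine ⟨2 * K ^ 2 + K + 1, by positivity, 1 / 2, ⟨by norm_num, by norm_num⟩, ?_⟩
  rintro θ ⟨hθ0, hθh⟩ a c hN hc hang
  have hθ1 : θ ≤ 1 := hθh.trans (by norm_num)
  have hθinv : θ ^ (-2 : ℤ) = (θ ^ 2)⁻¹ := by
    rw [zpow_neg, zpow_two, sq]
  have hNpos : (0 : ℝ) < ‖a‖ := lt_of_lt_of_le (by rw [hθinv]; positivity) hN
  have ha : a ≠ 0 := by simpa using hNpos.ne'
  set N := ‖a‖ with hNdef
  -- 1/N ≤ θ²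
  have hinvN : N⁻¹ ≤ θ ^ 2 := by
    rw [hθinv] at hN
    have := inv_anti₀ (by positivity) hN
    simpa using this
  set u : E := ‖a‖⁻¹ • a with hu
  set r : E := ‖ρ‖⁻¹ • ρ with hr
  have hnu : ‖u‖ = 1 := by
    rw [hu, norm_smul, norm_inv, norm_norm, inv_mul_cancel₀ hNpos.ne']
  have hnr : ‖r‖ = 1 := by
    rw [hr, norm_smul, norm_inv, norm_norm, inv_mul_cancel₀ (norm_ne_zero_iff.2 hρ)]
  -- ⟪u, r⟫ = cos angle
  have hur : ⟪u, r⟫ = Real.cos (InnerProductGeometry.angle a ρ) := by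
    rw [InnerProductGeometry.cos_angle, hu, hr, real_inner_smul_left, real_inner_smul_right]
    field_simp
  -- ‖u - r‖ ≤ θ
  have hang0 : 0 ≤ InnerProductGeometry.angle a ρ := InnerProductGeometry.angle_nonneg a ρ
  have hdiff : ‖u - r‖ ≤ θ := by
    have hsq : ‖u - r‖ ^ 2 = 2 - 2 * ⟪u, r⟫ := by
      rw [norm_sub_sq_real, hnu, hnr]; ring
    have h1 : 1 - Real.cos (InnerProductGeometry.angle a ρ) ≤ θ ^ 2 / 2 := by
      refine (one_sub_cos_le_half_sq' _).trans ?_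
      have : InnerProductGeometry.angle a ρ ^ 2 ≤ θ ^ 2 := by nlinarith
      linarith
    have h2 : ‖u - r‖ ^ 2 ≤ θ ^ 2 := by rw [hsq, hur]; linarith
    nlinarith [h2, norm_nonneg (u - r), hθ0.le]
  -- ⟪u - r, c⟫ bound
  have hb1 : |⟪u - r, c⟫| ≤ θ * K := by
    calc |⟪u - r, c⟫| ≤ ‖u - r‖ * ‖c‖ := abs_real_inner_le_norm _ _
      _ ≤ θ * K := by
          apply mul_le_mul hdiff hc (norm_nonneg _) hθ0.le
  -- main term bound
  set D := ‖a‖ - ‖a - c‖ with hD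
  set S := ‖a‖ + ‖a - c‖ with hS
  have hSN : N ≤ S := by
    have := norm_nonneg (a - c); rw [hS]; linarith
  have hSpos : 0 < S := lt_of_lt_of_le hNpos hSN
  have hDS : D * S = 2 * ⟪a, c⟫ - ‖c‖ ^ 2 := by
    have := norm_sub_sq_real a c
    rw [hD, hS]; nlinarith [this]
  have hDle : |D| ≤ K := (abs_norm_sub_norm_le a (a - c)).trans_eq (by simp) |>.trans hc
  have hac : |⟪a, c⟫| ≤ N * K :=
    (abs_real_inner_le_norm a c).trans (by
      apply mul_le_mul_of_nonneg_left hc (norm_nonneg a))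
  have huc : ⟪u, c⟫ = ⟪a, c⟫ / N := by
    rw [hu, real_inner_smul_left]; field_simp; rw [hNdef]; ring
  have hmain : |D - ⟪u, c⟫| ≤ 2 * K ^ 2 * θ ^ 2 := by
    have key : D - ⟪u, c⟫ = (⟪a, c⟫ * D - ‖c‖ ^ 2 * N) / (S * N) := by
      rw [huc, eq_div_iff (by positivity)]
      have h2N : S = 2 * N - D := by rw [hD, hS, hNdef]; ring
      calc (D - ⟪a, c⟫ / N) * (S * N) = D * S * N - ⟪a, c⟫ * S := by
            field_simp
        _ = ⟪a, c⟫ * D - ‖c‖ ^ 2 * N := by rw [hDS, h2N]; ring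
    rw [key, abs_div]
    rw [div_le_iff₀ (by positivity)]
    have hnum : |⟪a, c⟫ * D - ‖c‖ ^ 2 * N| ≤ 2 * N * K ^ 2 := by
      have h3 : |⟪a, c⟫ * D| ≤ N * K * K := by
        rw [abs_mul]
        apply mul_le_mul hac hDle (abs_nonneg _) (by positivity)
      have h4 : |‖c‖ ^ 2 * N| ≤ K ^ 2 * N := by
        rw [abs_mul, abs_of_nonneg hNpos.le]
        apply mul_le_mul_of_nonneg_right _ hNpos.le
        rw [abs_of_nonneg (by positivity)]
        nlinarith [norm_nonneg c]
      calc |⟪a, c⟫ * D - ‖c‖ ^ 2 * N| ≤ |⟪a, c⟫ * D| + |‖c‖ ^ 2 * N| := abs_sub _ _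
        _ ≤ 2 * N * K ^ 2 := by nlinarith
    refine hnum.trans ?_
    have habs : |S * N| = S * N := abs_of_nonneg (by positivity)
    rw [habs]
    have hNθ : 1 ≤ θ ^ 2 * N := by
      have := mul_le_mul_of_nonneg_right hinvN hNpos.le
      rwa [inv_mul_cancel₀ hNpos.ne'] at this
    have hstep : N * 1 ≤ N * (θ ^ 2 * N) := mul_le_mul_of_nonneg_left hNθ hNpos.le
    have h6 : 2 * K ^ 2 * (N * 1) ≤ 2 * K ^ 2 * (N * (θ ^ 2 * N)) :=
      mul_le_mul_of_nonneg_left hstep (by positivity)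
    have h7 : N * (θ ^ 2 * N) ≤ S * (θ ^ 2 * N) :=
      mul_le_mul_of_nonneg_right hSN (by positivity)
    have h8 : 2 * K ^ 2 * (N * (θ ^ 2 * N)) ≤ 2 * K ^ 2 * (S * (θ ^ 2 * N)) :=
      mul_le_mul_of_nonneg_left h7 (by positivity)
    calc 2 * N * K ^ 2 = 2 * K ^ 2 * (N * 1) := by ring
      _ ≤ 2 * K ^ 2 * (N * (θ ^ 2 * N)) := h6
      _ ≤ 2 * K ^ 2 * (S * (θ ^ 2 * N)) := h8
      _ = 2 * K ^ 2 * θ ^ 2 * (S * N) := by ring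
  -- combine
  have hsplit : |D - ⟪r, c⟫| ≤ |D - ⟪u, c⟫| + |⟪u - r, c⟫| := by
    have : D - ⟪r, c⟫ = (D - ⟪u, c⟫) + ⟪u - r, c⟫ := by
      rw [inner_sub_left]; ring
    rw [this]; exact abs_add_le _ _
  calc |D - ⟪r, c⟫| ≤ 2 * K ^ 2 * θ ^ 2 + θ * K := by
        refine hsplit.trans ?_; linarith
    _ ≤ (2 * K ^ 2 + K + 1) * θ := by
        nlinarith [mul_le_mul_of_nonneg_left hθ1 (by positivity : (0:ℝ) ≤ 2 * K ^ 2 * θ)]
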